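/- Let k be a field, n ≥ 3, A = k[X₁,…,X_{n−1}] with each Xᵢ of degree 1, m = (X₁,…,X_{n−1}), and let f₁,…,fₙ ∈ A be homogeneous of the same degree d ≥ 1, I = (f₁,…,fₙ). Let h : k[T₁,…,Tₙ] → A be the k-algebra morphism sending Tᵢ to fᵢ, and let α : A[T₁,…,Tₙ] → Sym_A(I) be the canonical surjection with α(Tᵢ) = fᵢ; grade Sym_A(I) = A[T]/ker(α) by the grading of A (deg Xᵢ = 1, deg Tᵢ = 0), with graded pieces Sym_A(I)_ν. Assume that I is of linear type outside V(m) and that η is an integer such that H⁰_m(Sym_A(I))_ν = 0 for all ν ≥ η. Then for all ν ≥ η, the annihilator ann_{k[T₁,…,Tₙ]}(Sym_A(I)_ν) of the k[T₁,…,Tₙ]-module Sym_A(I)_ν equals ker(h). -/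

import Mathlib

/-- The kernel of the canonical surjection `α : A[T₁,…,Tₙ] → Sym_A(I)`, `Tᵢ ↦ fᵢ`, for
`I = (f₁,…,fₙ)`:  `ker α = { Σᵢ Tᵢgᵢ : gᵢ ∈ A[T], Σᵢ fᵢgᵢ = 0 }`, so that
`Sym_A(I) = A[T₁,…,Tₙ]/ker α`. -/
noncomputable def symKernel {A : Type*} [CommRing A] {n : ℕ} (f : Fin n → A) :
    Ideal (MvPolynomial (Fin n) A) :=
  Ideal.span {P | ∃ g : Fin n → MvPolynomial (Fin n) A,
    (∑ i, MvPolynomial.C (f i) * g i) = 0 ∧ P = ∑ i, MvPolynomial.X i * g i}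

/-- The `A`-algebra morphism `β : A[T₁,…,Tₙ] → A[Z,Z⁻¹]`, `Tᵢ ↦ fᵢ·Z⁻¹`; its image is the
Rees algebra of `(f₁,…,fₙ)` and the canonical surjection `Sym_A(I) → Rees_A(I)` is an
isomorphism exactly when `ker β = ker α`. -/
noncomputable def reesBeta {A : Type*} [CommRing A] {n : ℕ} (f : Fin n → A) :
    MvPolynomial (Fin n) A →ₐ[A] LaurentPolynomial A :=
  MvPolynomial.aeval fun i => LaurentPolynomial.C (f i) * LaurentPolynomial.T (-1)

open MvPolynomial LaurentPolynomial

lemma aux_T_prod {R : Type*} [CommSemiring R] {ι : Type*} (s : Finset ι) (g : ι → ℤ) :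
    (∏ i ∈ s, (LaurentPolynomial.T (g i) : LaurentPolynomial R)) = LaurentPolynomial.T (∑ i ∈ s, g i) := by
  classical
  induction s using Finset.induction_on with
  | empty => simp
  | insert _ _ h ih => rw [Finset.prod_insert h, Finset.sum_insert h, ih, ← LaurentPolynomial.T_add]

lemma aux_gamma_homog {k A : Type*} [CommSemiring k] [CommSemiring A] [Algebra k A]
    {n e : ℕ} (f : Fin n → A) (Q : MvPolynomial (Fin n) k) (hQ : Q.IsHomogeneous e) :
    MvPolynomial.aeval (fun i => LaurentPolynomial.C (f i) * LaurentPolynomial.T (-1)) Q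
      = LaurentPolynomial.C (MvPolynomial.aeval f Q) * LaurentPolynomial.T (-(e : ℤ)) := by
  classical
  rw [← Q.support_sum_monomial_coeff, map_sum, map_sum, map_sum, Finset.sum_mul]
  refine Finset.sum_congr rfl fun mdeg hm => ?_
  rw [aeval_monomial, aeval_monomial]
  have hdeg : ∑ i ∈ mdeg.support, mdeg i = e := by
    have := hQ (MvPolynomial.mem_support_iff.mp hm)
    simpa [Finsupp.weight_apply, Finsupp.sum] using this
  have h1 : (mdeg.prod fun i k => (LaurentPolynomial.C (f i) * LaurentPolynomial.T (-1)) ^ k)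
      = LaurentPolynomial.C (mdeg.prod fun i k => f i ^ k) * LaurentPolynomial.T (-(e : ℤ)) := by
    rw [Finsupp.prod]
    have : ∀ i ∈ mdeg.support,
        (LaurentPolynomial.C (f i) * LaurentPolynomial.T (-1)) ^ (mdeg i)
        = LaurentPolynomial.C (f i ^ mdeg i) * LaurentPolynomial.T (-(mdeg i : ℤ)) := by
      intro i _
      rw [mul_pow, ← map_pow, LaurentPolynomial.T_pow, mul_neg_one]
    rw [Finset.prod_congr rfl this, Finset.prod_mul_distrib, ← map_prod, aux_T_prod]
    rw [Finsupp.prod]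
    congr 1
    rw [← hdeg]
    push_cast
    rw [Finset.sum_neg_distrib]
  rw [h1, ← mul_assoc]
  congr 1
  have : algebraMap k (LaurentPolynomial A) = (LaurentPolynomial.C).comp (algebraMap k A) := rfl
  rw [this, RingHom.comp_apply, ← map_mul]

lemma aux_reesBeta_map {k A : Type*} [CommSemiring k] [CommRing A] [Algebra k A]
    {n : ℕ} (f : Fin n → A) (Q : MvPolynomial (Fin n) k) :
    reesBeta f (MvPolynomial.map (algebraMap k A) Q)
      = MvPolynomial.aeval (fun i => LaurentPolynomial.C (f i) * LaurentPolynomial.T (-1)) Q := by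
  induction Q using MvPolynomial.induction_on with
  | C c => simp [reesBeta]
  | add p q hp hq => simp [hp, hq]
  | mul_X p i hp => rw [map_mul, map_mul, hp]; simp [reesBeta]

lemma aux_symKernel_le_ker {A : Type*} [CommRing A] {n : ℕ} (f : Fin n → A) :
    symKernel f ≤ RingHom.ker (reesBeta f) := by
  rw [symKernel, Ideal.span_le]
  rintro P ⟨g, hg, rfl⟩
  have : ∀ i : Fin n, reesBeta f (MvPolynomial.X i * g i)
      = LaurentPolynomial.T (-1) * reesBeta f (MvPolynomial.C (f i) * g i) := by
    intro i
    simp only [map_mul, reesBeta, MvPolynomial.aeval_X, MvPolynomial.aeval_C]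
    rw [LaurentPolynomial.C_eq_algebraMap]
    ring
  simp only [SetLike.mem_coe, RingHom.mem_ker, map_sum]
  rw [Finset.sum_congr rfl fun i _ => this i, ← Finset.mul_sum, ← map_sum, hg, map_zero, mul_zero]

noncomputable def evalOne (A : Type*) [CommSemiring A] : LaurentPolynomial A →ₐ[A] A :=
  (AddMonoidAlgebra.lift A A ℤ) 1

lemma evalOne_C {A : Type*} [CommSemiring A] (a : A) : evalOne A (LaurentPolynomial.C a) = a := by
  have : (LaurentPolynomial.C a : LaurentPolynomial A) = AddMonoidAlgebra.single 0 a := rfl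
  rw [evalOne, this, AddMonoidAlgebra.lift_single]
  simp

lemma evalOne_T {A : Type*} [CommSemiring A] (z : ℤ) : evalOne A (LaurentPolynomial.T z) = 1 := by
  have : (LaurentPolynomial.T z : LaurentPolynomial A) = AddMonoidAlgebra.single z 1 := rfl
  rw [evalOne, this, AddMonoidAlgebra.lift_single]
  simp

lemma aux_evalOne_gamma {k A : Type*} [CommSemiring k] [CommSemiring A] [Algebra k A]
    {n : ℕ} (f : Fin n → A) (Q : MvPolynomial (Fin n) k) :
    evalOne A (MvPolynomial.aeval
      (fun i => LaurentPolynomial.C (f i) * LaurentPolynomial.T (-1)) Q)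
      = MvPolynomial.aeval f Q := by
  induction Q using MvPolynomial.induction_on with
  | C c =>
      rw [MvPolynomial.aeval_C, MvPolynomial.aeval_C]
      have : algebraMap k (LaurentPolynomial A) c = LaurentPolynomial.C (algebraMap k A c) := rfl
      rw [this, evalOne_C]
  | add p q hp hq => simp [hp, hq]
  | mul_X p i hp => simp [hp, evalOne_C, evalOne_T]

lemma aux_gamma_zero {k : Type*} [CommRing k] {σ : Type*} {n d : ℕ} (hd : 1 ≤ d)
    (f : Fin n → MvPolynomial σ k) (hf : ∀ i, (f i).IsHomogeneous d)
    (P : MvPolynomial (Fin n) k) (hP : MvPolynomial.aeval f P = 0) :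
    MvPolynomial.aeval (fun i => LaurentPolynomial.C (f i) * LaurentPolynomial.T (-1)) P = 0 := by
  classical
  have hcomp : ∀ e : ℕ, MvPolynomial.aeval f (homogeneousComponent e P) = 0 := by
    intro e
    by_cases he : e < P.totalDegree + 1
    · have hsum : ∑ e' ∈ Finset.range (P.totalDegree + 1),
          MvPolynomial.aeval f (homogeneousComponent e' P) = 0 := by
        rw [← map_sum, MvPolynomial.sum_homogeneousComponent, hP]
      have h2 := congrArg (MvPolynomial.homogeneousComponent (d * e)) hsum
      rw [map_sum, map_zero] at h2
      have h3 : ∀ e' ∈ Finset.range (P.totalDegree + 1),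
          MvPolynomial.homogeneousComponent (d * e)
            (MvPolynomial.aeval f (homogeneousComponent e' P))
          = if e' = e then MvPolynomial.aeval f (homogeneousComponent e' P) else 0 := by
        intro e' _
        rw [MvPolynomial.homogeneousComponent_of_mem
          ((MvPolynomial.mem_homogeneousSubmodule _ _).mpr
            ((homogeneousComponent_isHomogeneous e' P).aeval f hf))]
        refine if_congr ?_ rfl rfl
        constructor
        · intro h; exact (Nat.eq_of_mul_eq_mul_left (by omega) h).symm
        · intro h; rw [h]
      rw [Finset.sum_congr rfl h3, Finset.sum_ite_eq' _ e, if_pos (Finset.mem_range.mpr he)] at h2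
      exact h2
    · rw [MvPolynomial.homogeneousComponent_eq_zero _ _ (by omega), map_zero]
  conv_lhs => rw [← MvPolynomial.sum_homogeneousComponent P]
  rw [map_sum]
  refine Finset.sum_eq_zero fun e _ => ?_
  rw [aux_gamma_homog f _ (homogeneousComponent_isHomogeneous e P), hcomp, map_zero, zero_mul]

lemma aux_localization {A : Type*} [CommRing A] {n : ℕ} (p : Ideal A) [p.IsPrime]
    (K1 K2 : Ideal (MvPolynomial (Fin n) A))
    (heq : Ideal.map (MvPolynomial.map (algebraMap A (Localization.AtPrime p))) K1
         = Ideal.map (MvPolynomial.map (algebraMap A (Localization.AtPrime p))) K2)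
    {x : MvPolynomial (Fin n) A} (hx : x ∈ K1) :
    ∃ s : A, s ∉ p ∧ MvPolynomial.C s * x ∈ K2 := by
  letI : Algebra (MvPolynomial (Fin n) A) (MvPolynomial (Fin n) (Localization.AtPrime p)) :=
    MvPolynomial.algebraMvPolynomial
  haveI := MvPolynomial.isLocalization (σ := Fin n) p.primeCompl (Localization.AtPrime p)
  set M := Submonoid.map (MvPolynomial.C (σ := Fin n) (R := A)) p.primeCompl with hM
  have halg : algebraMap (MvPolynomial (Fin n) A) (MvPolynomial (Fin n) (Localization.AtPrime p))
      = MvPolynomial.map (algebraMap A (Localization.AtPrime p)) := MvPolynomial.algebraMap_def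
  have h1 : algebraMap (MvPolynomial (Fin n) A) (MvPolynomial (Fin n) (Localization.AtPrime p)) x
      ∈ Ideal.map (algebraMap (MvPolynomial (Fin n) A)
          (MvPolynomial (Fin n) (Localization.AtPrime p))) K2 := by
    rw [halg, ← heq]
    exact Ideal.mem_map_of_mem _ hx
  obtain ⟨⟨⟨z, hz⟩, ⟨sP, hsP⟩⟩, hmul⟩ :=
    (IsLocalization.mem_map_algebraMap_iff M (MvPolynomial (Fin n) (Localization.AtPrime p))).mp h1
  have h2 : algebraMap (MvPolynomial (Fin n) A) (MvPolynomial (Fin n) (Localization.AtPrime p))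
      (x * sP - z) = 0 := by
    rw [map_sub, map_mul, hmul, sub_self]
  obtain ⟨⟨tP, htP⟩, ht⟩ :=
    (IsLocalization.map_eq_zero_iff M (MvPolynomial (Fin n) (Localization.AtPrime p)) _).mp h2
  obtain ⟨t₀, ht₀, rfl⟩ := htP
  obtain ⟨s₀, hs₀, rfl⟩ := hsP
  refine ⟨t₀ * s₀, Submonoid.mul_mem _ ht₀ hs₀, ?_⟩
  have h3 : MvPolynomial.C t₀ * MvPolynomial.C s₀ * x = MvPolynomial.C t₀ * z := by
    linear_combination ht
  rw [map_mul, h3]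
  exact Ideal.mul_mem_left _ _ hz
/-- let `k` be a field, `n ≥ 3`, `A = k[X₁,…,X_{n-1}]`,
`m = (X₁,…,X_{n-1})`, `f₁,…,fₙ ∈ A` homogeneous of degree `d ≥ 1`, `I = (f₁,…,fₙ)`,
`h : k[T₁,…,Tₙ] → A`, `Tᵢ ↦ fᵢ`, and grade `Sym_A(I) = A[T]/ker α` by the grading of `A`.
Assume `I` is of linear type outside `V(m)` and `η` is an integer with
`H⁰_m(Sym_A(I))_ν = 0` for all `ν ≥ η`.  Then for all `ν ≥ η` the annihilator of the
`k[T₁,…,Tₙ]`-module `Sym_A(I)_ν` is `ker h`:  a polynomial `P ∈ k[T₁,…,Tₙ]` kills every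
`F ∈ A[T]` all of whose coefficients are homogeneous of degree `ν` (modulo `ker α`) iff
`P(f₁,…,fₙ) = 0`. -/
theorem statement17 {k : Type*} [Field k] (n d : ℕ) (hn : 3 ≤ n) (hd : 1 ≤ d)
    (f : Fin n → MvPolynomial (Fin (n - 1)) k)
    (hf : ∀ i, (f i).IsHomogeneous d)
    (m : Ideal (MvPolynomial (Fin (n - 1)) k))
    (hm : m = Ideal.span (Set.range MvPolynomial.X))
    (I : Ideal (MvPolynomial (Fin (n - 1)) k)) (hI : I = Ideal.span (Set.range f))
    (hlt : ∀ p : PrimeSpectrum (MvPolynomial (Fin (n - 1)) k), ¬ m ≤ p.asIdeal →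
      Ideal.map (MvPolynomial.map
          (algebraMap (MvPolynomial (Fin (n - 1)) k) (Localization.AtPrime p.asIdeal)))
          (RingHom.ker (reesBeta f))
        = Ideal.map (MvPolynomial.map
          (algebraMap (MvPolynomial (Fin (n - 1)) k) (Localization.AtPrime p.asIdeal)))
          (symKernel f))
    (η : ℤ)
    (hη : ∀ ν : ℕ, η ≤ (ν : ℤ) →
      ∀ F : MvPolynomial (Fin n) (MvPolynomial (Fin (n - 1)) k),
        (∀ e, (F.coeff e).IsHomogeneous ν) →
        (∃ N : ℕ, ∀ r ∈ m ^ N, MvPolynomial.C r * F ∈ symKernel f) →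
        F ∈ symKernel f) :
    ∀ ν : ℕ, η ≤ (ν : ℤ) →
      ∀ P : MvPolynomial (Fin n) k,
        ((∀ F : MvPolynomial (Fin n) (MvPolynomial (Fin (n - 1)) k),
            (∀ e, (F.coeff e).IsHomogeneous ν) →
            MvPolynomial.map
              (algebraMap k (MvPolynomial (Fin (n - 1)) k)) P * F ∈ symKernel f)
          ↔ P ∈ RingHom.ker (MvPolynomial.aeval f :
              MvPolynomial (Fin n) k →ₐ[k] MvPolynomial (Fin (n - 1)) k)) := by
  intro ν hν P
  constructor
  · intro hPF
    have hvar : 0 < n - 1 := by omega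
    set g : MvPolynomial (Fin (n - 1)) k := MvPolynomial.X (⟨0, hvar⟩ : Fin (n - 1)) ^ ν with hg
    have hghom : ∀ e, ((MvPolynomial.C g :
        MvPolynomial (Fin n) (MvPolynomial (Fin (n - 1)) k)).coeff e).IsHomogeneous ν := by
      intro e
      rw [MvPolynomial.coeff_C]
      split
      · exact MvPolynomial.isHomogeneous_X_pow _ _
      · exact MvPolynomial.isHomogeneous_zero _ _ _
    have hker := aux_symKernel_le_ker f (hPF (MvPolynomial.C g) hghom)
    rw [RingHom.mem_ker, map_mul, aux_reesBeta_map] at hker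
    have hCg : reesBeta f (MvPolynomial.C g) = LaurentPolynomial.C g := by
      simp only [reesBeta, MvPolynomial.aeval_C]
      exact (LaurentPolynomial.C_eq_algebraMap g).symm
    rw [hCg] at hker
    rcases mul_eq_zero.mp hker with h0 | h0
    · rw [RingHom.mem_ker]
      have h1 := congrArg (evalOne (MvPolynomial (Fin (n - 1)) k)) h0
      rw [aux_evalOne_gamma, map_zero] at h1
      exact h1
    · exfalso
      have h1 := congrArg (evalOne (MvPolynomial (Fin (n - 1)) k)) h0
      rw [evalOne_C, map_zero] at h1
      exact pow_ne_zero _ (MvPolynomial.X_ne_zero _) h1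
  · intro hP F hF
    rw [RingHom.mem_ker] at hP
    set x := MvPolynomial.map (algebraMap k (MvPolynomial (Fin (n - 1)) k)) P * F with hxdef
    have hxker : x ∈ RingHom.ker (reesBeta f) := by
      rw [RingHom.mem_ker, hxdef, map_mul, aux_reesBeta_map,
        aux_gamma_zero hd f hf P hP, zero_mul]
    have hxhom : ∀ e, (x.coeff e).IsHomogeneous ν := by
      intro e
      rw [hxdef, MvPolynomial.coeff_mul]
      apply MvPolynomial.IsHomogeneous.sum
      rintro ⟨a, b⟩ -
      rw [MvPolynomial.coeff_map, MvPolynomial.algebraMap_eq]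
      simpa using (MvPolynomial.isHomogeneous_C _ (P.coeff a)).mul (hF b)
    set J : Ideal (MvPolynomial (Fin (n - 1)) k) :=
      Ideal.comap (MvPolynomial.C) ((symKernel f).colon (Ideal.span {x})) with hJ
    have hJmem : ∀ a, a ∈ J ↔ MvPolynomial.C a * x ∈ symKernel f := by
      intro a
      rw [hJ, Ideal.mem_comap]
      exact Ideal.mem_colon_span_singleton
    have hJp : ∀ p : PrimeSpectrum (MvPolynomial (Fin (n - 1)) k),
        ¬ m ≤ p.asIdeal → ¬ J ≤ p.asIdeal := by
      intro p hp hle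
      haveI := p.isPrime
      obtain ⟨s, hs, hsx⟩ := aux_localization p.asIdeal _ _ (hlt p hp) hxker
      exact hs (hle ((hJmem s).mpr hsx))
    have hrad : m ≤ J.radical := by
      rw [Ideal.radical_eq_sInf]
      refine le_sInf fun J' hJ' => ?_
      by_contra hcon
      exact hJp ⟨J', hJ'.2⟩ hcon hJ'.1
    have hfg : m.FG := by
      rw [hm]; exact Submodule.fg_span (Set.finite_range _)
    obtain ⟨N, hN⟩ := Ideal.exists_pow_le_of_le_radical_of_fg hrad hfg
    exact hη ν hν x hxhom ⟨N, fun r hr => (hJmem r).mp (hN hr)⟩
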